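/- arXiv:0902.3693 — 2 statements merged into one kernel-verified Lean document; each statement's English description precedes it below -/
import Mathlib

section
/- In the group K = ⟨α₁,…,α_l, β ∣ α₁ᵖ = α₂ᑫ, α₂ᵖ = α₃ᑫ, …, α_{l−1}ᵖ = α_lᑫ, β⁻¹α_lᵖβ = α₁ᑫ⟩, the relation β⁻¹αᵢ^{pˡ}β = αᵢ^{qˡ} holds for each i with 1 ≤ i ≤ l. -/
/-- In any group in which generators `α 0, …, α (l-1), β` satisfy the relations
`(α i)ᵖ = (α (i+1))ᑫ` for `0 ≤ i < l - 1` and `β⁻¹ (α (l-1))ᵖ β = (α 0)ᑫ`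
(the relations of the group `K`), the relation `β⁻¹ (α i)^(pˡ) β = (α i)^(qˡ)`
holds for every `i < l`. -/
theorem conj_pow_pow {G : Type*} [Group G] (p q l : ℕ) (hl : 0 < l)
    (α : ℕ → G) (β : G)
    (hrel : ∀ i, i + 1 < l → (α i) ^ p = (α (i + 1)) ^ q)
    (hrelβ : β⁻¹ * (α (l - 1)) ^ p * β = (α 0) ^ q) :
    ∀ i < l, β⁻¹ * (α i) ^ (p ^ l) * β = (α i) ^ (q ^ l) := by
  have key : ∀ k i m, i + k + 1 ≤ l → α i ^ (p ^ k * m) = α (i + k) ^ (q ^ k * m) := by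
    intro k
    induction k with
    | zero => intro i m _; simp
    | succ k ih =>
      intro i m h
      have h1 : i + k + 1 ≤ l := by omega
      have h2 : i + k + 1 < l := by omega
      calc α i ^ (p ^ (k + 1) * m) = α i ^ (p ^ k * (p * m)) := by ring_nf
        _ = α (i + k) ^ (q ^ k * (p * m)) := ih i (p * m) h1
        _ = (α (i + k) ^ p) ^ (q ^ k * m) := by rw [← pow_mul]; ring_nf
        _ = (α (i + k + 1) ^ q) ^ (q ^ k * m) := by rw [hrel _ h2]
        _ = α (i + (k + 1)) ^ (q ^ (k + 1) * m) := by
              rw [← pow_mul]; ring_nf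
  intro i hi
  have conjpow : ∀ (x : G) (n : ℕ), β⁻¹ * x ^ n * β = (β⁻¹ * x * β) ^ n := by
    intro x n
    induction n with
    | zero => simp
    | succ n ih =>
      rw [pow_succ, pow_succ, ← ih]
      group
  set k := l - 1 - i with hk
  have hik : i + k = l - 1 := by omega
  have hkl : k + (i + 1) = l := by omega
  have e1 : α i ^ (p ^ l) = α (l - 1) ^ (p * (q ^ k * p ^ i)) := by
    have := key k i (p ^ (i + 1)) (by omega)
    rw [hik] at this
    calc α i ^ (p ^ l) = α i ^ (p ^ k * p ^ (i + 1)) := by rw [← pow_add, hkl]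
      _ = α (l - 1) ^ (q ^ k * p ^ (i + 1)) := this
      _ = α (l - 1) ^ (p * (q ^ k * p ^ i)) := by ring_nf
  have e2 : α 0 ^ (p ^ i * q ^ (k + 1)) = α i ^ (q ^ i * q ^ (k + 1)) := by
    have := key i 0 (q ^ (k + 1)) (by omega)
    simpa using this
  calc β⁻¹ * α i ^ (p ^ l) * β = β⁻¹ * (α (l - 1) ^ p) ^ (q ^ k * p ^ i) * β := by
        rw [e1, pow_mul]
    _ = (β⁻¹ * α (l - 1) ^ p * β) ^ (q ^ k * p ^ i) := conjpow _ _
    _ = (α 0 ^ q) ^ (q ^ k * p ^ i) := by rw [hrelβ]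
    _ = α 0 ^ (p ^ i * q ^ (k + 1)) := by rw [← pow_mul]; ring_nf
    _ = α i ^ (q ^ i * q ^ (k + 1)) := e2
    _ = α i ^ (q ^ l) := by rw [← pow_add, show i + (k + 1) = l by omega]
end

section
/- Let p, q be integers with a common factor k > 1, say p = kp', q = kq'. The kernel of the homomorphism BS(p,q) → ℤ/k sending b to 0 and a to 1 is an index-k subgroup, and it admits a surjection onto the free group of rank k. -/
open FreeGroup SemidirectProduct

/-- Cyclic shift action of `ZMod k` on the free group on `ZMod k`. -/
private def shiftAut (k : ℕ) : Multiplicative (ZMod k) →* MulAut (FreeGroup (ZMod k)) :=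
  MonoidHom.mk' (fun z => FreeGroup.freeGroupCongr (Equiv.addRight z.toAdd)) (by
    intro x y
    apply MulEquiv.toMonoidHom_injective
    apply FreeGroup.ext_hom
    intro i
    show freeGroupCongr _ (of i) = freeGroupCongr _ (freeGroupCongr _ (of i))
    simp only [freeGroupCongr_apply, map.of, Equiv.coe_addRight]
    exact congrArg FreeGroup.of (by rw [toAdd_mul]; ring))

private theorem shiftAut_of (k : ℕ) (z : Multiplicative (ZMod k)) (i : ZMod k) :
    shiftAut k z (FreeGroup.of i) = FreeGroup.of (i + z.toAdd) := by
  simp [shiftAut]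

open FreeGroup in
/-- Let `p, q` be integers with a common factor `k > 1`.  In the Baumslag–Solitar group
`BS(p,q) = ⟨a, b ∣ b⁻¹ aᵖ b = aᑫ⟩` (presented on `a = of true`, `b = of false`), the
kernel of the homomorphism `BS(p,q) → ℤ/k` sending `b` to `0` and `a` to `1` is a
subgroup of index `k`, and it admits a surjection onto the free group of rank `k`. -/
theorem baumslag_solitar_kernel_surjects_free (p q : ℤ) (k : ℕ) (hk : 1 < k)
    (hp : (k : ℤ) ∣ p) (hq : (k : ℤ) ∣ q)
    (ψ : PresentedGroup
        ({(of false)⁻¹ * (of true) ^ p * of false * (of true) ^ (-q)} :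
          Set (FreeGroup Bool)) →* Multiplicative (ZMod k))
    (hψa : ψ (PresentedGroup.of true) = Multiplicative.ofAdd (1 : ZMod k))
    (hψb : ψ (PresentedGroup.of false) = 1) :
    ψ.ker.index = k ∧ ∃ f : ψ.ker →* FreeGroup (Fin k), Function.Surjective f := by
  haveI : NeZero k := ⟨by omega⟩
  -- the target semidirect product
  set G := FreeGroup (ZMod k) ⋊[shiftAut k] Multiplicative (ZMod k) with hG
  set σ : Multiplicative (ZMod k) := Multiplicative.ofAdd (1 : ZMod k) with hσ
  set f : Bool → G := fun x => if x then inr σ else inl (FreeGroup.of 0) with hf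
  have hσpow : ∀ m : ℤ, (k : ℤ) ∣ m → σ ^ m = 1 := by
    intro m hm
    have h1 : σ ^ m = Multiplicative.ofAdd ((m : ZMod k)) := by
      rw [hσ, ← ofAdd_zsmul, zsmul_eq_mul, mul_one]
    rw [h1, (ZMod.intCast_zmod_eq_zero_iff_dvd m k).2 hm, ofAdd_zero]
  have hrel : ∀ r ∈ ({(of false)⁻¹ * (of true) ^ p * of false * (of true) ^ (-q)} :
      Set (FreeGroup Bool)), FreeGroup.lift f r = 1 := by
    intro r hr
    rw [Set.mem_singleton_iff] at hr; subst hr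
    have hT : FreeGroup.lift f (of true) = inr σ := by simp [hf]
    have hF : FreeGroup.lift f (of false) = inl (FreeGroup.of 0) := by simp [hf]
    have hinr : ∀ m : ℤ, (k : ℤ) ∣ m → (inr σ : G) ^ m = 1 := by
      intro m hm
      rw [← _root_.map_zpow, hσpow m hm, _root_.map_one]
    rw [_root_.map_mul, _root_.map_mul, _root_.map_mul, _root_.map_inv, _root_.map_zpow,
      _root_.map_zpow, hT, hF, hinr p hp, hinr (-q) (dvd_neg.2 hq)]
    group
  set F := PresentedGroup.toGroup hrel with hFdef
  have hFt : F (PresentedGroup.of true) = inr σ := by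
    rw [hFdef, PresentedGroup.toGroup.of]; simp [hf]
  have hFf : F (PresentedGroup.of false) = inl (FreeGroup.of 0) := by
    rw [hFdef, PresentedGroup.toGroup.of]; simp [hf]
  -- the right component of F is ψ
  have hcomp : rightHom.comp F = ψ := by
    apply PresentedGroup.ext
    intro x
    cases x with
    | true => simp [hFt, hψa, hσ]
    | false => simp [hFf, hψb]
  have hright : ∀ g : ψ.ker, (F g.1).right = 1 := by
    intro g
    have h1 : rightHom (F g.1) = ψ g.1 := DFunLike.congr_fun hcomp g.1
    have h2 : ψ g.1 = 1 := g.2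
    rw [h2] at h1
    simpa using h1
  -- the surjection onto the free group on ZMod k
  set f₀ : ψ.ker →* FreeGroup (ZMod k) := MonoidHom.mk' (fun g => (F g.1).left) (by
    intro g h
    show (F (g.1 * h.1)).left = _
    rw [_root_.map_mul, mul_left, hright g, _root_.map_one, MulAut.one_apply]) with hf₀
  have key : ∀ z : ZMod k, ∃ g : ψ.ker, f₀ g = FreeGroup.of z := by
    intro z
    set A := (PresentedGroup.of true : PresentedGroup
      ({(of false)⁻¹ * (of true) ^ p * of false * (of true) ^ (-q)} :
        Set (FreeGroup Bool))) with hA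
    set B := (PresentedGroup.of false : PresentedGroup
      ({(of false)⁻¹ * (of true) ^ p * of false * (of true) ^ (-q)} :
        Set (FreeGroup Bool))) with hB
    have hmem : A ^ z.val * B * (A ^ z.val)⁻¹ ∈ ψ.ker := by
      rw [MonoidHom.mem_ker, _root_.map_mul, _root_.map_mul, _root_.map_inv, _root_.map_pow, hψa, hψb]
      group
    refine ⟨⟨_, hmem⟩, ?_⟩
    have hFval : F (A ^ z.val * B * (A ^ z.val)⁻¹)
        = inl (shiftAut k (σ ^ z.val) (FreeGroup.of 0)) := by
      rw [inl_aut, _root_.map_mul, _root_.map_mul, _root_.map_inv, _root_.map_pow, hFt, hFf, ← _root_.map_pow, ← _root_.map_inv]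
    have hσz : σ ^ z.val = Multiplicative.ofAdd z := by
      rw [hσ, ← ofAdd_nsmul, nsmul_eq_mul, mul_one, ZMod.natCast_val, ZMod.cast_id]
    show (F (A ^ z.val * B * (A ^ z.val)⁻¹)).left = FreeGroup.of z
    rw [hFval, left_inl, hσz, shiftAut_of]
    simp
  have hsurj₀ : Function.Surjective f₀ := by
    rw [← MonoidHom.range_eq_top]
    rw [← top_le_iff, ← FreeGroup.closure_range_of (ZMod k)]
    rw [Subgroup.closure_le]
    rintro _ ⟨z, rfl⟩
    obtain ⟨g, hg⟩ := key z
    exact ⟨g, hg⟩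
  -- transport to Fin k
  have e : ZMod k ≃ Fin k := Fintype.equivFinOfCardEq (ZMod.card k)
  -- ψ is surjective
  have hsurjψ : Function.Surjective ψ := by
    intro y
    refine ⟨(PresentedGroup.of true) ^ (y.toAdd).val, ?_⟩
    rw [_root_.map_pow, hψa, ← ofAdd_nsmul, nsmul_eq_mul, mul_one, ZMod.natCast_val, ZMod.cast_id]
    rfl
  constructor
  · have : ψ.ker.index = Nat.card (Multiplicative (ZMod k)) := by
      rw [Subgroup.index]
      exact Nat.card_congr (QuotientGroup.quotientKerEquivOfSurjective ψ hsurjψ).toEquiv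
    rw [this, Nat.card_eq_fintype_card, Fintype.card_multiplicative]
    exact ZMod.card k
  · exact ⟨(FreeGroup.freeGroupCongr e).toMonoidHom.comp f₀,
      (FreeGroup.freeGroupCongr e).surjective.comp hsurj₀⟩
end
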